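/- Let Γ be a Fuchsian group and x a future lightlike vector in Minkowski space. Then the origin is an accumulation point of the orbit Γx. -/

import Mathlib

open Pointwise

noncomputable section

/-- The Minkowski bilinear form on ℝ^{d+1}. -/
def mink (d : ℕ) (x y : Fin (d+1) → ℝ) : ℝ :=
  (∑ i : Fin d, x i.castSucc * y i.castSucc) - x (Fin.last d) * y (Fin.last d)

/-- The open future cone. -/
def FutureCone (d : ℕ) : Set (Fin (d+1) → ℝ) :=
  {x | mink d x x < 0 ∧ 0 < x (Fin.last d)}

/-- The hyperboloid model of hyperbolic space. -/
def Hyperboloid (d : ℕ) : Set (Fin (d+1) → ℝ) :=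
  {x | mink d x x = -1 ∧ 0 < x (Fin.last d)}

/-- A Fuchsian group: linear isometries of the Minkowski form preserving the future
cone and acting freely cocompactly on the hyperboloid. -/
structure IsFuchsian (d : ℕ)
    (Γ : Subgroup ((Fin (d+1) → ℝ) ≃ₗ[ℝ] (Fin (d+1) → ℝ))) : Prop where
  isom : ∀ γ ∈ Γ, ∀ x y, mink d (γ x) (γ y) = mink d x y
  cone : ∀ γ ∈ Γ, ∀ x ∈ FutureCone d, γ x ∈ FutureCone d
  free : ∀ γ ∈ Γ, γ ≠ 1 → ∀ x ∈ Hyperboloid d, γ x ≠ x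
  cocompact : ∃ C : Set (Fin (d+1) → ℝ), IsCompact C ∧ C ⊆ Hyperboloid d ∧
    ∀ x ∈ Hyperboloid d, ∃ γ ∈ Γ, ∃ c ∈ C, γ c = x

/-- A Γ-convex (Fuchsian convex) body. -/
structure IsFuchsianConvexBody (d : ℕ)
    (Γ : Subgroup ((Fin (d+1) → ℝ) ≃ₗ[ℝ] (Fin (d+1) → ℝ)))
    (K : Set (Fin (d+1) → ℝ)) : Prop where
  nonempty : K.Nonempty
  isClosed : IsClosed K
  convex : Convex ℝ K
  subset : K ⊆ FutureCone d
  proper : K ≠ FutureCone d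
  invariant : ∀ γ ∈ Γ, (⇑γ) '' K = K

private lemma aux_key (w cl η : ℝ) (hw : 0 < w) (hη : 0 < η) (hcl : 0 < cl)
    (hCS : (w * cl - η) * (w * cl - η) ≤ w * w * (cl * cl - 1)) :
    w ≤ 2 * cl * η := by
  nlinarith [sq_nonneg η, sq_nonneg (w - η)]

private lemma aux_eps (B xl u ε cl w : ℝ) (hmul : u * (2 * B * xl + 1) = ε)
    (hw : w ≤ 2 * cl * (xl * u)) (hclB : cl ≤ B) (hη : 0 < xl * u)
    (hu : 0 < u) (hxl : 0 < xl) : w < ε := by nlinarith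

private lemma aux_abs (t w : ℝ) (h : t * t ≤ w * w) (hw : 0 < w) : |t| ≤ w := by
  nlinarith [abs_mul_abs_self t, abs_nonneg t]

/-- For a Fuchsian group Γ and a future lightlike vector x, the origin is an
accumulation point of the orbit Γx. -/
theorem stmt7 (d : ℕ) (Γ : Subgroup ((Fin (d+1) → ℝ) ≃ₗ[ℝ] (Fin (d+1) → ℝ)))
    (hΓ : IsFuchsian d Γ) (x : Fin (d+1) → ℝ)
    (hl : mink d x x = 0) (hx0 : x ≠ 0) (hxf : 0 < x (Fin.last d)) :
    ∀ ε : ℝ, 0 < ε → ∃ γ ∈ Γ, γ x ≠ 0 ∧ ‖γ x‖ < ε := by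
  intro ε hε
  obtain ⟨C, hCcomp, hCsub, hCcov⟩ := hΓ.cocompact
  obtain ⟨B0, hB0⟩ := hCcomp.isBounded.subset_closedBall 0
  set B : ℝ := max B0 1 with hBdef
  have hB1 : (1:ℝ) ≤ B := le_max_right _ _
  set xl := x (Fin.last d) with hxl
  have hSx : (∑ i : Fin d, x i.castSucc * x i.castSucc) = xl * xl := by
    have h := hl; unfold mink at h; linarith
  have hxlne : xl ≠ 0 := ne_of_gt hxf
  set u : ℝ := ε / (2 * B * xl + 1) with hu
  have hden : (0:ℝ) < 2 * B * xl + 1 := by nlinarith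
  have hu0 : 0 < u := div_pos hε hden
  have hune : u ≠ 0 := ne_of_gt hu0
  set a : ℝ := (u + 1/u) / 2 with hadef
  set b : ℝ := (1/u - u) / 2 with hbdef
  have hab : a * a - b * b = 1 := by rw [hadef, hbdef]; field_simp; ring
  have hamb : a - b = u := by rw [hadef, hbdef]; field_simp; ring
  have ha : 0 < a := by
    rw [hadef]
    have h1 : 0 < 1/u := by positivity
    linarith
  set q : Fin (d+1) → ℝ := fun i => if i = Fin.last d then a else b * (x i / xl) with hqdef
  have hql : q (Fin.last d) = a := by simp [hqdef]
  have hqc : ∀ j : Fin d, q j.castSucc = b * (x j.castSucc / xl) := by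
    intro j; simp [hqdef, (Fin.castSucc_lt_last j).ne]
  have hsumq : ∑ j : Fin d, q j.castSucc * q j.castSucc = b * b := by
    have hterm : ∀ j : Fin d, q j.castSucc * q j.castSucc
        = (b * b / (xl * xl)) * (x j.castSucc * x j.castSucc) := by
      intro j; rw [hqc j]; field_simp
    rw [Finset.sum_congr rfl (fun j _ => hterm j), ← Finset.mul_sum, hSx]
    field_simp
  have hqq : mink d q q = -1 := by
    unfold mink; rw [hql, hsumq]; linarith [hab]
  have hqH : q ∈ Hyperboloid d := ⟨hqq, by rw [hql]; exact ha⟩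
  have hxq : mink d x q = -(xl * u) := by
    unfold mink
    rw [hql]
    have hterm : ∀ j : Fin d, x j.castSucc * q j.castSucc
        = (b / xl) * (x j.castSucc * x j.castSucc) := by
      intro j; rw [hqc j]; field_simp
    rw [Finset.sum_congr rfl (fun j _ => hterm j), ← Finset.mul_sum, hSx]
    have h1 : b / xl * (xl * xl) = b * xl := by field_simp
    rw [h1, ← hxl]
    linear_combination (-xl) * hamb
  obtain ⟨γ, hγ, c, hc, hgc⟩ := hCcov q hqH
  have hγi : γ⁻¹ ∈ Γ := inv_mem hγ
  set y : Fin (d+1) → ℝ := (γ⁻¹ : (Fin (d+1) → ℝ) ≃ₗ[ℝ] (Fin (d+1) → ℝ)) x with hydef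
  have hy0 : y ≠ 0 := by
    intro h
    apply hx0
    have h2 : x = γ y := by rw [hydef]; exact (γ.apply_symm_apply x).symm
    rw [h2, h, map_zero]
  have hyy : mink d y y = 0 := by rw [hydef, hΓ.isom _ hγi, hl]
  have hcq : c = (γ⁻¹ : (Fin (d+1) → ℝ) ≃ₗ[ℝ] (Fin (d+1) → ℝ)) q := by
    rw [← hgc]; exact (γ.symm_apply_apply c).symm
  have hyc : mink d y c = -(xl * u) := by
    rw [hydef, hcq, hΓ.isom _ hγi, hxq]
  -- positivity of last coordinate of y
  set p : Fin (d+1) → ℝ := fun i => if i = Fin.last d then (1:ℝ) else 0 with hpdef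
  have hconeS : ∀ s : ℝ, 0 < s →
      0 < ((γ⁻¹ : (Fin (d+1) → ℝ) ≃ₗ[ℝ] (Fin (d+1) → ℝ)) (x + s • p)) (Fin.last d) := by
    intro s hs
    have h2 : (x + s • p) (Fin.last d) = xl + s := by simp [hpdef, hxl]
    have hmem : x + s • p ∈ FutureCone d := by
      constructor
      · unfold mink
        have h1 : ∀ j : Fin d, (x + s • p) j.castSucc * (x + s • p) j.castSucc
            = x j.castSucc * x j.castSucc := by
          intro j
          simp [hpdef, (Fin.castSucc_lt_last j).ne]
        rw [Finset.sum_congr rfl (fun j _ => h1 j), hSx, h2]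
        nlinarith
      · rw [h2]; linarith
    exact (hΓ.cone _ hγi _ hmem).2
  have hyl0 : 0 ≤ y (Fin.last d) := by
    by_contra hneg
    push_neg at hneg
    set K := ((γ⁻¹ : (Fin (d+1) → ℝ) ≃ₗ[ℝ] (Fin (d+1) → ℝ)) p) (Fin.last d) with hK
    have key : ∀ s : ℝ, 0 < s → 0 < y (Fin.last d) + s * K := by
      intro s hs
      have h3 := hconeS s hs
      rw [map_add, map_smul] at h3
      simpa [hydef, hK] using h3
    rcases le_or_gt K 0 with hK0 | hK0
    · have := key 1 one_pos; linarith
    · have h4 := key (-(y (Fin.last d)) / K) (div_pos (by linarith) hK0)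
      rw [div_mul_cancel₀ _ (ne_of_gt hK0)] at h4
      linarith
  have hSy : (∑ j : Fin d, y j.castSucc * y j.castSucc)
      = y (Fin.last d) * y (Fin.last d) := by
    have h := hyy; unfold mink at h; linarith
  have hylpos : 0 < y (Fin.last d) := by
    rcases lt_or_eq_of_le hyl0 with h | h
    · exact h
    · exfalso
      apply hy0
      have hsum : (∑ j : Fin d, y j.castSucc * y j.castSucc) = 0 := by
        rw [hSy, ← h]; ring
      have hzero : ∀ j : Fin d, y j.castSucc = 0 := by
        intro j
        have hj := (Finset.sum_eq_zero_iff_of_nonneg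
          (fun j _ => mul_self_nonneg (y j.castSucc))).mp hsum j (Finset.mem_univ j)
        exact mul_self_eq_zero.mp hj
      funext i
      simp only [Pi.zero_apply]
      refine Fin.lastCases ?_ ?_ i
      · exact h.symm
      · intro j; exact hzero j
  -- facts about c
  have hcH := hCsub hc
  have hclpos : 0 < c (Fin.last d) := hcH.2
  have hSc : (∑ j : Fin d, c j.castSucc * c j.castSucc)
      = c (Fin.last d) * c (Fin.last d) - 1 := by
    have h := hcH.1; unfold mink at h; linarith
  have hclB : c (Fin.last d) ≤ B := by
    have h1 : ‖c‖ ≤ B0 := by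
      have := hB0 hc
      rwa [Metric.mem_closedBall, dist_zero_right] at this
    have h2 : ‖c (Fin.last d)‖ ≤ ‖c‖ := norm_le_pi_norm c (Fin.last d)
    rw [Real.norm_eq_abs] at h2
    calc c (Fin.last d) ≤ |c (Fin.last d)| := le_abs_self _
      _ ≤ B0 := le_trans h2 h1
      _ ≤ B := le_max_left _ _
  -- Cauchy–Schwarz
  have hCS := Finset.sum_mul_sq_le_sq_mul_sq Finset.univ
    (fun j : Fin d => y j.castSucc) (fun j : Fin d => c j.castSucc)
  simp only [pow_two] at hCS
  have hA : (∑ j : Fin d, y j.castSucc * c j.castSucc)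
      = y (Fin.last d) * c (Fin.last d) - xl * u := by
    have h := hyc; unfold mink at h; linarith
  rw [hA, hSy, hSc] at hCS
  have hη : 0 < xl * u := mul_pos hxf hu0
  -- key bound : y last ≤ 2 * c last * (xl * u)
  have hkey : y (Fin.last d) ≤ 2 * c (Fin.last d) * (xl * u) :=
    aux_key _ _ _ hylpos hη hclpos hCS
  have hkey2 : y (Fin.last d) < ε := by
    have hmulc : u * (2 * B * xl + 1) = ε := div_mul_cancel₀ ε (ne_of_gt hden)
    exact aux_eps B xl u ε _ _ hmulc hkey hclB hη hu0 hxf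
  have hnorm : ‖y‖ ≤ y (Fin.last d) := by
    rw [pi_norm_le_iff_of_nonneg hyl0]
    intro i
    refine Fin.lastCases ?_ ?_ i
    · rw [Real.norm_eq_abs, abs_of_pos hylpos]
    · intro j
      have hterm : y j.castSucc * y j.castSucc
          ≤ y (Fin.last d) * y (Fin.last d) := by
        rw [← hSy]
        exact Finset.single_le_sum (f := fun j : Fin d => y j.castSucc * y j.castSucc)
          (fun j _ => mul_self_nonneg _) (Finset.mem_univ j)
      rw [Real.norm_eq_abs]
      exact aux_abs _ _ hterm hylpos
  exact ⟨γ⁻¹, hγi, hy0, lt_of_le_of_lt hnorm hkey2⟩
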